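/- For every first-order sentence φ of quantifier depth at most 2, the property 'the connected graph G satisfies φ' admits a local certification scheme with certificates of size O(log n) bits. -/

import Mathlib

/-! ### First-order logic on graphs -/

/-- First-order formulas in the language of graphs (equality and one binary
adjacency relation), with free variables among `Fin n`. -/
inductive GraphFormula : ℕ → Type where
  | eq : ∀ {n : ℕ}, Fin n → Fin n → GraphFormula n
  | adj : ∀ {n : ℕ}, Fin n → Fin n → GraphFormula n
  | not : ∀ {n : ℕ}, GraphFormula n → GraphFormula n
  | and : ∀ {n : ℕ}, GraphFormula n → GraphFormula n → GraphFormula n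
  | or : ∀ {n : ℕ}, GraphFormula n → GraphFormula n → GraphFormula n
  | all : ∀ {n : ℕ}, GraphFormula (n + 1) → GraphFormula n
  | ex : ∀ {n : ℕ}, GraphFormula (n + 1) → GraphFormula n

namespace GraphFormula

/-- Quantifier depth of a formula: the maximum number of nested quantifiers. -/
def qdepth : ∀ {n : ℕ}, GraphFormula n → ℕ
  | _, .eq _ _ => 0
  | _, .adj _ _ => 0
  | _, .not f => qdepth f
  | _, .and f g => max (qdepth f) (qdepth g)
  | _, .or f g => max (qdepth f) (qdepth g)
  | _, .all f => qdepth f + 1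
  | _, .ex f => qdepth f + 1

/-- Satisfaction of a formula in a simple graph, under an assignment of the
free variables. -/
def Sat {V : Type*} (G : SimpleGraph V) : ∀ {n : ℕ}, GraphFormula n → (Fin n → V) → Prop
  | _, .eq i j, a => a i = a j
  | _, .adj i j, a => G.Adj (a i) (a j)
  | _, .not f, a => ¬ Sat G f a
  | _, .and f g, a => Sat G f a ∧ Sat G g a
  | _, .or f g, a => Sat G f a ∨ Sat G g a
  | _, .all f, a => ∀ v, Sat G f (Fin.snoc a v)
  | _, .ex f, a => ∃ v, Sat G f (Fin.snoc a v)

/-- Existential closure: prefix a formula with one existential quantifier for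
each of its free variables. -/
def exClosure : ∀ {n : ℕ}, GraphFormula n → GraphFormula 0
  | 0, f => f
  | _ + 1, f => exClosure (GraphFormula.ex f)

end GraphFormula

/-- A graph satisfies a sentence (formula with no free variables). -/
def SatSentence {V : Type*} (G : SimpleGraph V) (φ : GraphFormula 0) : Prop :=
  GraphFormula.Sat G φ Fin.elim0

/-! ### Local certification -/

/-- A valid identifier assignment: pairwise distinct identifiers in `[1, n ^ c]`. -/
def ValidIds (c : ℕ) {n : ℕ} (ids : Fin n → ℕ) : Prop :=
  Function.Injective ids ∧ ∀ v, 1 ≤ ids v ∧ ids v ≤ n ^ c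

/-- The part of the local view of a vertex `v` consisting of the
(identifier, certificate) pairs of its neighbors. -/
def neighborsView {n : ℕ} (G : SimpleGraph (Fin n)) (ids : Fin n → ℕ)
    (cert : Fin n → List Bool) (v : Fin n) : Set (ℕ × List Bool) :=
  {p | ∃ u, G.Adj v u ∧ p = (ids u, cert u)}

/-- The part of the local view of a vertex `v`, in the presence of inputs
(labels), consisting of the (identifier, label, certificate) triples of its
neighbors. -/
def labeledNeighborsView {n : ℕ} {L : Type*} (G : SimpleGraph (Fin n)) (ids : Fin n → ℕ)
    (lab : Fin n → L) (cert : Fin n → List Bool) (v : Fin n) :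
    Set (ℕ × L × List Bool) :=
  {p | ∃ u, G.Adj v u ∧ p = (ids u, lab u, cert u)}

/-! ### Rooted trees, elimination trees and treedepth -/

/-- A rooted tree on the vertex set `V`, given by its root and parent
function: every vertex reaches the root by iterating the parent map. -/
structure ElimTree (V : Type*) where
  root : V
  parent : V → V
  parent_root : parent root = root
  reaches_root : ∀ v, ∃ j : ℕ, parent^[j] v = root

namespace ElimTree

variable {V : Type*}

/-- The depth of a vertex in a rooted tree (the root has depth 0). -/
noncomputable def depth (T : ElimTree V) (v : V) : ℕ :=
  sInf {j : ℕ | T.parent^[j] v = T.root}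

/-- `u` is an ancestor of `v` (possibly `u = v`). -/
def IsAncestor (T : ElimTree V) (u v : V) : Prop :=
  ∃ j : ℕ, T.parent^[j] v = u

/-- The set of vertices of `S` in the subtree rooted at `v`. -/
def subtree (T : ElimTree V) (S : Set V) (v : V) : Set V :=
  {x ∈ S | T.IsAncestor v x}

end ElimTree

/-- `T` is a `t`-model (elimination tree of depth at most `t`) of `G`:
every vertex has depth at most `t` and every edge of `G` joins a vertex to
one of its ancestors. -/
def IsModelOfDepth {V : Type*} (T : ElimTree V) (G : SimpleGraph V) (t : ℕ) : Prop :=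
  (∀ v, T.depth v ≤ t) ∧ ∀ u v, G.Adj u v → T.IsAncestor u v ∨ T.IsAncestor v u

/-- The graph `G` has treedepth at most `t`. -/
def TreedepthLE {V : Type*} (G : SimpleGraph V) (t : ℕ) : Prop :=
  ∃ T : ElimTree V, IsModelOfDepth T G t

/-- A model `T` of `G` is coherent if for every non-root vertex `w` (i.e.
every child `w` of a vertex of `T`), some vertex of the subtree rooted at `w`
is adjacent in `G` to the parent of `w`. -/
def Coherent {V : Type*} (T : ElimTree V) (G : SimpleGraph V) : Prop :=
  ∀ w, w ≠ T.root → ∃ x, T.IsAncestor w x ∧ G.Adj x (T.parent w)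

/-! ### Types, prunings and k-reduced graphs -/

/-- The type of `v` in the induced structure on `S₁` equals the type of `w`
in the induced structure on `S₂`: there is a bijection between the subtrees
rooted at `v` and `w` preserving the tree structure, the depths, and the
ancestor vectors (adjacency in `G` to the ancestors). -/
def SameTypeIn {V : Type*} (G : SimpleGraph V) (T : ElimTree V)
    (S₁ S₂ : Set V) (v w : V) : Prop :=
  ∃ f : V → V,
    Set.BijOn f (T.subtree S₁ v) (T.subtree S₂ w) ∧
    f v = w ∧
    (∀ x ∈ T.subtree S₁ v, x ≠ v → f (T.parent x) = T.parent (f x)) ∧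
    (∀ x ∈ T.subtree S₁ v, T.depth (f x) = T.depth x ∧
      ∀ m : ℕ, G.Adj x (T.parent^[m] x) ↔ G.Adj (f x) (T.parent^[m] (f x)))

/-- Two vertices of `S` have the same type. -/
def SameType {V : Type*} (G : SimpleGraph V) (T : ElimTree V) (S : Set V) (v w : V) : Prop :=
  SameTypeIn G T S S v w

/-- A valid pruning operation on the current vertex set `S`: `u` is a vertex
whose parent has more than `k` children (in `S`) of the same type as `u`, and
the whole subtree rooted at `u` is removed, yielding `S'`. -/
def PruneStep {V : Type*} (G : SimpleGraph V) (T : ElimTree V) (k : ℕ)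
    (S : Set V) (u : V) (S' : Set V) : Prop :=
  u ∈ S ∧ u ≠ T.root ∧
  (∃ C : Set V, C ⊆ S ∧ u ∈ C ∧ C.Finite ∧ k + 1 ≤ C.ncard ∧
    (∀ w ∈ C, T.parent w = T.parent u ∧ w ≠ T.parent u) ∧
    (∀ w ∈ C, SameType G T S u w)) ∧
  S' = S \ {x | T.IsAncestor u x}

/-- A valid pruning operation performed at a vertex of the largest possible
depth among all currently possible pruning operations. -/
def MaxPruneStep {V : Type*} (G : SimpleGraph V) (T : ElimTree V) (k : ℕ)
    (S : Set V) (u : V) (S' : Set V) : Prop :=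
  PruneStep G T k S u S' ∧
    ∀ u' S'', PruneStep G T k S u' S'' → T.depth u' ≤ T.depth u

/-- A complete pruning process producing a `k`-reduced graph of `G` from the
model `T`: starting from all of `G`, valid pruning operations are applied,
always at a vertex of largest possible depth, until none applies. -/
structure PruningProcess {V : Type*} (G : SimpleGraph V) (T : ElimTree V) (k : ℕ) where
  len : ℕ
  sets : ℕ → Set V
  prunedAt : ℕ → V
  init : sets 0 = Set.univ
  step : ∀ i < len, MaxPruneStep G T k (sets i) (prunedAt i) (sets (i + 1))
  halt : ∀ u S', ¬ PruneStep G T k (sets len) u S'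

namespace PruningProcess

variable {V : Type*} {G : SimpleGraph V} {T : ElimTree V} {k : ℕ}

/-- The vertex set of the resulting `k`-reduced graph. -/
def result (P : PruningProcess G T k) : Set V := P.sets P.len

/-- The index of the step at which a vertex was deleted (the current set at
that moment still contains the vertex); for surviving vertices this is the
final index. -/
noncomputable def lastIdx (P : PruningProcess G T k) (v : V) : ℕ :=
  sInf {i : ℕ | i = P.len ∨ v ∉ P.sets (i + 1)}

/-- The vertex set that was current when `v` was deleted (for a deleted
vertex), or the final vertex set (for a surviving vertex). -/
noncomputable def currentSet (P : PruningProcess G T k) (v : V) : Set V :=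
  P.sets (P.lastIdx v)

/-- `v` and `w` have the same end type: the end type of a deleted vertex is
its type in the graph current when it was deleted, and the end type of a
surviving vertex is its type in the resulting graph. -/
def EndTypeEq (P : PruningProcess G T k) (v w : V) : Prop :=
  SameTypeIn G T (P.currentSet v) (P.currentSet w) v w

end PruningProcess

section MT

variable {α β : Type*}

/-- partial isomorphism -/
def PIso (G : SimpleGraph α) (H : SimpleGraph β) {k : ℕ} (a : Fin k → α) (b : Fin k → β) : Prop :=
  ∀ i j : Fin k, (a i = a j ↔ b i = b j) ∧ (G.Adj (a i) (a j) ↔ H.Adj (b i) (b j))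

def BF (G : SimpleGraph α) (H : SimpleGraph β) : ℕ → ∀ {k : ℕ}, (Fin k → α) → (Fin k → β) → Prop
  | 0, _, a, b => PIso G H a b
  | (r+1), _, a, b => PIso G H a b ∧
      (∀ v, ∃ w, BF G H r (Fin.snoc a v) (Fin.snoc b w)) ∧
      (∀ w, ∃ v, BF G H r (Fin.snoc a v) (Fin.snoc b w))

lemma BF.piso {G : SimpleGraph α} {H : SimpleGraph β} {r k} {a : Fin k → α} {b : Fin k → β}
    (h : BF G H r a b) : PIso G H a b := by
  cases r with
  | zero => exact h
  | succ r => exact h.1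

lemma BF_sat {G : SimpleGraph α} {H : SimpleGraph β} :
    ∀ {k} (f : GraphFormula k) (r : ℕ), f.qdepth ≤ r →
      ∀ (a : Fin k → α) (b : Fin k → β), BF G H r a b →
        (GraphFormula.Sat G f a ↔ GraphFormula.Sat H f b) := by
  intro k f
  induction f with
  | eq i j =>
    intro r _ a b hbf
    exact (hbf.piso i j).1
  | adj i j =>
    intro r _ a b hbf
    exact (hbf.piso i j).2
  | not f ih =>
    intro r hr a b hbf
    exact not_congr (ih r hr a b hbf)
  | and f g ihf ihg =>
    intro r hr a b hbf
    simp only [GraphFormula.qdepth, max_le_iff] at hr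
    exact and_congr (ihf r hr.1 a b hbf) (ihg r hr.2 a b hbf)
  | or f g ihf ihg =>
    intro r hr a b hbf
    simp only [GraphFormula.qdepth, max_le_iff] at hr
    exact or_congr (ihf r hr.1 a b hbf) (ihg r hr.2 a b hbf)
  | all f ih =>
    intro r hr a b hbf
    simp only [GraphFormula.qdepth] at hr
    obtain ⟨r, rfl⟩ : ∃ r', r = r' + 1 := ⟨r - 1, by omega⟩
    constructor
    · intro hs w
      obtain ⟨v, hv⟩ := hbf.2.2 w
      exact (ih r (by omega) _ _ hv).mp (hs v)
    · intro hs v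
      obtain ⟨w, hw⟩ := hbf.2.1 v
      exact (ih r (by omega) _ _ hw).mpr (hs w)
  | ex f ih =>
    intro r hr a b hbf
    simp only [GraphFormula.qdepth] at hr
    obtain ⟨r, rfl⟩ : ∃ r', r = r' + 1 := ⟨r - 1, by omega⟩
    constructor
    · rintro ⟨v, hv⟩
      obtain ⟨w, hw⟩ := hbf.2.1 v
      exact ⟨w, (ih r (by omega) _ _ hw).mp hv⟩
    · rintro ⟨w, hw⟩
      obtain ⟨v, hv⟩ := hbf.2.2 w
      exact ⟨v, (ih r (by omega) _ _ hv).mpr hw⟩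

/-- class predicates -/
def pA (V : Type*) : Prop := ∀ u v : V, u = v

def isUniv (G : SimpleGraph α) (v : α) : Prop := ∀ u, u ≠ v → G.Adj v u

def pU (G : SimpleGraph α) : Prop := ∃ v, isUniv G v

def pK (G : SimpleGraph α) : Prop := ∀ u v : α, u ≠ v → G.Adj u v

lemma pA_pK {G : SimpleGraph α} (h : pA α) : pK G := fun u v huv => absurd (h u v) huv

lemma pK_pU {G : SimpleGraph α} [Nonempty α] (h : pK G) : pU G :=
  ⟨Classical.arbitrary α, fun u hu => h _ _ (Ne.symm hu)⟩

lemma exists_adj_of_ne {G : SimpleGraph α} (hG : G.Connected) {x y : α} (h : x ≠ y) :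
    ∃ z, G.Adj x z := by
  obtain ⟨p⟩ := hG x y
  cases p with
  | nil => exact absurd rfl h
  | cons h q => exact ⟨_, h⟩

lemma round2 {G : SimpleGraph α} {H : SimpleGraph β} (hH : H.Connected)
    (hA : pA α ↔ pA β) {v : α} {w : β} (hu : isUniv G v ↔ isUniv H w) (v₂ : α) :
    ∃ w₂ : β, (v = v₂ ↔ w = w₂) ∧ (G.Adj v v₂ ↔ H.Adj w w₂) := by
  by_cases hvv : v = v₂
  · subst hvv
    exact ⟨w, by simp⟩
  by_cases hadj : G.Adj v v₂
  · have hnA : ¬ pA β := fun h => by rw [← hA] at h; exact hvv (h v v₂)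
    have : ∃ y : β, y ≠ w := by
      by_contra hc
      push_neg at hc
      exact hnA fun u v => (hc u).trans (hc v).symm
    obtain ⟨y, hy⟩ := this
    obtain ⟨w₂, hw₂⟩ := exists_adj_of_ne hH (Ne.symm hy)
    exact ⟨w₂, ⟨by simp [hvv, hw₂.ne], by simp [hadj, hw₂]⟩⟩
  · have : ¬ isUniv G v := fun h => hadj (h v₂ (Ne.symm hvv))
    rw [hu] at this
    unfold isUniv at this
    push_neg at this
    obtain ⟨w₂, hw₂, hnadj⟩ := this
    exact ⟨w₂, ⟨by simp [hvv, Ne.symm hw₂], by simp [hadj, hnadj]⟩⟩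

lemma round1 {G : SimpleGraph α} {H : SimpleGraph β}
    (hK : pK G ↔ pK H) (hU : pU G ↔ pU H) (v : α) :
    ∃ w : β, (isUniv G v ↔ isUniv H w) := by
  by_cases h : isUniv G v
  · obtain ⟨w, hw⟩ := hU.mp ⟨v, h⟩
    exact ⟨w, by simp [h, hw]⟩
  · have hnK : ¬ pK H := by
      rw [← hK]
      intro hk
      exact h fun u hu => hk v u (Ne.symm hu)
    unfold pK at hnK
    push_neg at hnK
    obtain ⟨a, b, hab, hnadj⟩ := hnK
    refine ⟨a, by simp [h]; intro ha; exact hnadj (ha b (Ne.symm hab))⟩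

lemma BF1 {G : SimpleGraph α} {H : SimpleGraph β} (hG : G.Connected) (hH : H.Connected)
    (hA : pA α ↔ pA β) {v : α} {w : β} (hu : isUniv G v ↔ isUniv H w) :
    BF G H 1 (Fin.snoc Fin.elim0 v) (Fin.snoc Fin.elim0 w) := by
  have av : ∀ i : Fin 1, (Fin.snoc Fin.elim0 v : Fin 1 → α) i = v := fun i => by
    rw [Subsingleton.elim i (Fin.last 0), Fin.snoc_last]
  have bw : ∀ i : Fin 1, (Fin.snoc Fin.elim0 w : Fin 1 → β) i = w := fun i => by
    rw [Subsingleton.elim i (Fin.last 0), Fin.snoc_last]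
  refine ⟨fun i j => by simp [av, bw], ?_, ?_⟩
  · intro v₂
    obtain ⟨w₂, h1, h2⟩ := round2 hH hA hu v₂
    refine ⟨w₂, ?_⟩
    intro i j
    fin_cases i <;> fin_cases j <;>
      simp [Fin.snoc, av, bw, h1, h2, eq_comm, G.adj_comm v₂ v, H.adj_comm w₂ w]
  · intro w₂
    obtain ⟨v₂, h1, h2⟩ := round2 hG hA.symm hu.symm w₂
    refine ⟨v₂, ?_⟩
    intro i j
    fin_cases i <;> fin_cases j <;>
      simp [Fin.snoc, av, bw, h1.symm, h2.symm, eq_comm, G.adj_comm v₂ v, H.adj_comm w₂ w]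

lemma BF2 {n m : ℕ} {G : SimpleGraph (Fin n)} {H : SimpleGraph (Fin m)}
    (hG : G.Connected) (hH : H.Connected) (hA : pA (Fin n) ↔ pA (Fin m))
    (hK : pK G ↔ pK H) (hU : pU G ↔ pU H) :
    BF G H 2 (Fin.elim0) (Fin.elim0) := by
  refine ⟨fun i j => i.elim0, ?_, ?_⟩
  · intro v
    obtain ⟨w, hw⟩ := round1 hK hU v
    exact ⟨w, BF1 hG hH hA hw⟩
  · intro w
    obtain ⟨v, hv⟩ := round1 hK.symm hU.symm w
    exact ⟨v, BF1 hG hH hA hv.symm⟩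

theorem invariance {n m : ℕ} {G : SimpleGraph (Fin n)} {H : SimpleGraph (Fin m)}
    (hG : G.Connected) (hH : H.Connected) (hA : pA (Fin n) ↔ pA (Fin m))
    (hK : pK G ↔ pK H) (hU : pU G ↔ pU H) (φ : GraphFormula 0) (hφ : φ.qdepth ≤ 2) :
    SatSentence G φ ↔ SatSentence H φ :=
  BF_sat φ 2 hφ _ _ (BF2 hG hH hA hK hU)

end MT



section Enc

/-- little-endian binary value of a list of bits -/
def fromB : List Bool → ℕ
  | [] => 0
  | b :: l => (if b then 1 else 0) + 2 * fromB l

/-- `W`-bit little-endian representation -/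
def toB : ℕ → ℕ → List Bool
  | 0, _ => []
  | (W+1), n => (decide (n % 2 = 1)) :: toB W (n / 2)

lemma length_toB (W : ℕ) : ∀ n, (toB W n).length = W := by
  induction W with
  | zero => intro n; rfl
  | succ W ih => intro n; simp [toB, ih]

lemma fromB_toB (W : ℕ) : ∀ n, n < 2 ^ W → fromB (toB W n) = n := by
  induction W with
  | zero => intro n h; interval_cases n; rfl
  | succ W ih =>
    intro n h
    have h2 : n / 2 < 2 ^ W := by
      rw [pow_succ] at h; omega
    simp only [toB, fromB, ih _ h2]
    rcases Nat.mod_two_eq_zero_or_one n with h | h <;> simp [h] <;> omega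

/-- extract field `k` of a certificate made of six equal-width fields -/
def fieldOf (k : ℕ) (l : List Bool) : ℕ :=
  fromB ((l.drop (k * (l.length / 6))).take (l.length / 6))

/-- build a certificate from six values -/
def mkC (W a b d s x y : ℕ) : List Bool :=
  toB W a ++ (toB W b ++ (toB W d ++ (toB W s ++ (toB W x ++ toB W y))))

lemma length_mkC (W a b d s x y : ℕ) : (mkC W a b d s x y).length = 6 * W := by
  simp [mkC, length_toB]; ring

lemma drop_toB (W n : ℕ) (l : List Bool) : (toB W n ++ l).drop W = l := by
  have := List.drop_left (l₁ := toB W n) (l₂ := l)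
  rwa [length_toB] at this

lemma take_toB (W n : ℕ) (l : List Bool) : (toB W n ++ l).take W = toB W n := by
  have := List.take_left (l₁ := toB W n) (l₂ := l)
  rwa [length_toB] at this

lemma fieldOf_mkC (W a b d s x y : ℕ) (hb : a < 2^W ∧ b < 2^W ∧ d < 2^W ∧ s < 2^W ∧ x < 2^W ∧ y < 2^W) :
    fieldOf 0 (mkC W a b d s x y) = a ∧ fieldOf 1 (mkC W a b d s x y) = b ∧
    fieldOf 2 (mkC W a b d s x y) = d ∧ fieldOf 3 (mkC W a b d s x y) = s ∧
    fieldOf 4 (mkC W a b d s x y) = x ∧ fieldOf 5 (mkC W a b d s x y) = y := by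
  obtain ⟨ha, hbb, hd, hs, hx, hy⟩ := hb
  have hlen : (mkC W a b d s x y).length / 6 = W := by rw [length_mkC]; omega
  refine ⟨?_, ?_, ?_, ?_, ?_, ?_⟩ <;> simp only [fieldOf, hlen]
  · rw [Nat.zero_mul, List.drop_zero, mkC, take_toB, fromB_toB _ _ ha]
  · rw [Nat.one_mul, mkC, drop_toB, take_toB, fromB_toB _ _ hbb]
  · rw [show 2 * W = W + W by ring, ← List.drop_drop, mkC, drop_toB, drop_toB, take_toB,
      fromB_toB _ _ hd]
  · rw [show 3 * W = W + (W + W) by ring, ← List.drop_drop, ← List.drop_drop, mkC, drop_toB,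
      drop_toB, drop_toB, take_toB, fromB_toB _ _ hs]
  · rw [show 4 * W = W + (W + (W + W)) by ring, ← List.drop_drop, ← List.drop_drop,
      ← List.drop_drop, mkC, drop_toB, drop_toB, drop_toB, drop_toB, take_toB, fromB_toB _ _ hx]
  · rw [show 5 * W = W + (W + (W + (W + W))) by ring, ← List.drop_drop, ← List.drop_drop,
      ← List.drop_drop, ← List.drop_drop, mkC, drop_toB, drop_toB, drop_toB, drop_toB, drop_toB]
    rw [List.take_of_length_le (by rw [length_toB])]
    exact fromB_toB _ _ hy

end Enc

section Cert

open Classical in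
/-- the class label of a graph: 0 = single vertex, 1 = complete, 2 = has a universal
vertex but not complete, 3 = no universal vertex. -/
noncomputable def glabel {V : Type*} (G : SimpleGraph V) : ℕ :=
  if pA V then 0 else if pK G then 1 else if pU G then 2 else 3

lemma glabel_spec {V : Type*} [Nonempty V] (G : SimpleGraph V) :
    (glabel G = 0 ↔ pA V) ∧ (glabel G = 1 ↔ ¬ pA V ∧ pK G) ∧
    (glabel G = 2 ↔ ¬ pK G ∧ pU G) ∧ (glabel G = 3 ↔ ¬ pU G) := by
  have h12 : pA V → pK G := pA_pK
  have h23 : pK G → pU G := pK_pU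
  unfold glabel
  split_ifs with h1 h2 h3 <;> norm_num <;> tauto

/-- the sentence `φ` is true on all connected graphs of class `ℓ`. -/
def TrueOn (φ : GraphFormula 0) (ℓ : ℕ) : Prop :=
  ∀ (m : ℕ) (H : SimpleGraph (Fin m)), H.Connected → glabel H = ℓ → SatSentence H φ

lemma trueOn_glabel {n : ℕ} (G : SimpleGraph (Fin n)) (hG : G.Connected)
    (φ : GraphFormula 0) (hφ : φ.qdepth ≤ 2) (hSat : SatSentence G φ) :
    TrueOn φ (glabel G) := by
  intro m H hH hlab
  haveI := hG.nonempty
  haveI := hH.nonempty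
  obtain ⟨g0, g1, g2, g3⟩ := glabel_spec G
  obtain ⟨h0, h1, h2, h3⟩ := glabel_spec H
  have hval : glabel G = 0 ∨ glabel G = 1 ∨ glabel G = 2 ∨ glabel G = 3 := by
    unfold glabel; split_ifs <;> simp
  have key : (pA (Fin n) ↔ pA (Fin m)) ∧ (pK G ↔ pK H) ∧ (pU G ↔ pU H) := by
    rcases hval with hv | hv | hv | hv <;> rw [hv] at hlab
    · have := g0.mp hv; have := h0.mp hlab
      exact ⟨iff_of_true ‹_› ‹_›, iff_of_true (pA_pK ‹_›) (pA_pK ‹_›),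
        iff_of_true (pK_pU (pA_pK ‹_›)) (pK_pU (pA_pK ‹_›))⟩
    · obtain ⟨ga, gk⟩ := g1.mp hv; obtain ⟨ha, hk⟩ := h1.mp hlab
      exact ⟨iff_of_false ga ha, iff_of_true gk hk, iff_of_true (pK_pU gk) (pK_pU hk)⟩
    · obtain ⟨gk, gu⟩ := g2.mp hv; obtain ⟨hk, hu⟩ := h2.mp hlab
      exact ⟨iff_of_false (fun h => gk (pA_pK h)) (fun h => hk (pA_pK h)),
        iff_of_false gk hk, iff_of_true gu hu⟩
    · have gu := g3.mp hv; have hu := h3.mp hlab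
      exact ⟨iff_of_false (fun h => gu (pK_pU (pA_pK h))) (fun h => hu (pK_pU (pA_pK h))),
        iff_of_false (fun h => gu (pK_pU h)) (fun h => hu (pK_pU h)), iff_of_false gu hu⟩
  exact (invariance hG hH key.1 key.2.1 key.2.2 φ hφ).mp hSat

/-- the local acceptance predicate of the verifier. -/
def AccProp (φ : GraphFormula 0) (i : ℕ) (ct : List Bool) (S : Set (ℕ × List Bool)) : Prop :=
  S.Finite ∧
  (∀ p ∈ S, fieldOf 0 p.2 = fieldOf 0 ct ∧ fieldOf 1 p.2 = fieldOf 1 ct ∧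
    fieldOf 2 p.2 = fieldOf 2 ct) ∧
  fieldOf 0 ct ≤ 3 ∧ TrueOn φ (fieldOf 0 ct) ∧
  (fieldOf 0 ct = 0 → S = ∅) ∧
  (fieldOf 0 ct = 1 →
    (i = fieldOf 1 ct ∨ ∃ p ∈ S, p.1 = fieldOf 1 ct) ∧ S.ncard = fieldOf 2 ct ∧
      1 ≤ fieldOf 2 ct) ∧
  (fieldOf 0 ct = 2 →
    (i = fieldOf 1 ct ∨ ∃ p ∈ S, p.1 = fieldOf 1 ct) ∧
    (i = fieldOf 1 ct → S.ncard = fieldOf 2 ct) ∧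
    (0 < fieldOf 3 ct → ∃ p ∈ S, fieldOf 3 p.2 < fieldOf 3 ct) ∧
    (fieldOf 3 ct = 0 → S.ncard ≠ fieldOf 2 ct)) ∧
  (fieldOf 0 ct = 3 →
    (∀ p ∈ S, p.1 ≠ fieldOf 4 ct) ∧ fieldOf 4 ct ≠ i ∧
    (∃ p ∈ S, p.1 = fieldOf 5 ct) ∧
    (∀ p ∈ S, fieldOf 5 p.2 = i → ∃ q ∈ S, q.1 = fieldOf 4 p.2))

open Classical in
noncomputable def verifyF (φ : GraphFormula 0) (i : ℕ) (ct : List Bool)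
    (S : Set (ℕ × List Bool)) : Bool :=
  if AccProp φ i ct S then true else false

lemma verifyF_eq_true {φ i ct S} : verifyF φ i ct S = true ↔ AccProp φ i ct S := by
  by_cases h : AccProp φ i ct S <;> simp [verifyF, h]

lemma view_eq {n : ℕ} (G : SimpleGraph (Fin n)) (ids : Fin n → ℕ) (cert : Fin n → List Bool)
    (v : Fin n) :
    neighborsView G ids cert v = (fun u => (ids u, cert u)) '' G.neighborSet v := by
  ext p
  constructor
  · rintro ⟨u, h1, rfl⟩; exact ⟨u, h1, rfl⟩
  · rintro ⟨u, h1, rfl⟩; exact ⟨u, h1, rfl⟩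

lemma view_finite {n : ℕ} (G : SimpleGraph (Fin n)) (ids : Fin n → ℕ)
    (cert : Fin n → List Bool) (v : Fin n) : (neighborsView G ids cert v).Finite := by
  rw [view_eq]; exact (G.neighborSet v).toFinite.image _

lemma view_ncard {n : ℕ} (G : SimpleGraph (Fin n)) {ids : Fin n → ℕ}
    (hids : Function.Injective ids) (cert : Fin n → List Bool) (v : Fin n) :
    (neighborsView G ids cert v).ncard = (G.neighborSet v).ncard := by
  rw [view_eq]
  exact Set.ncard_image_of_injective _ fun a b h => hids (congrArg Prod.fst h)

lemma mem_view {n : ℕ} {G : SimpleGraph (Fin n)} {ids : Fin n → ℕ} {cert : Fin n → List Bool}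
    {v u : Fin n} (h : G.Adj v u) : (ids u, cert u) ∈ neighborsView G ids cert v :=
  ⟨u, h, rfl⟩

lemma nbrSet_subset {n : ℕ} (G : SimpleGraph (Fin n)) (v : Fin n) :
    G.neighborSet v ⊆ Set.univ \ {v} := fun u hu => ⟨trivial, (G.ne_of_adj hu).symm⟩

lemma ncard_univ_diff {n : ℕ} (v : Fin n) : (Set.univ \ {v} : Set (Fin n)).ncard = n - 1 := by
  rw [Set.ncard_diff_singleton_of_mem (Set.mem_univ v), Set.ncard_univ,
    Nat.card_eq_fintype_card, Fintype.card_fin]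

lemma nbrSet_univ_of_isUniv {n : ℕ} {G : SimpleGraph (Fin n)} {w : Fin n} (h : isUniv G w) :
    G.neighborSet w = Set.univ \ {w} := by
  apply Set.eq_of_subset_of_ncard_le (nbrSet_subset G w) ?_ (Set.toFinite _)
  apply Set.ncard_le_ncard ?_ (G.neighborSet w).toFinite
  rintro u ⟨-, hu⟩
  exact h u hu

lemma ncard_nbr_of_isUniv {n : ℕ} {G : SimpleGraph (Fin n)} {w : Fin n} (h : isUniv G w) :
    (G.neighborSet w).ncard = n - 1 := by
  rw [nbrSet_univ_of_isUniv h, ncard_univ_diff]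

lemma pK_of_ncards {n : ℕ} {G : SimpleGraph (Fin n)}
    (h : ∀ v, (G.neighborSet v).ncard = n - 1) (hn : 2 ≤ n) : pK G := by
  intro u v huv
  have heq : G.neighborSet u = Set.univ \ {u} := by
    apply Set.eq_of_subset_of_ncard_le (nbrSet_subset G u) ?_ (Set.toFinite _)
    rw [ncard_univ_diff, h]
  have : v ∈ G.neighborSet u := by rw [heq]; exact ⟨trivial, Ne.symm huv⟩
  exact this

lemma two_le_of_not_pA {n : ℕ} (h : ¬ pA (Fin n)) : 2 ≤ n := by
  by_contra hn
  push_neg at hn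
  exact h fun u v => Fin.ext (by omega)

lemma not_pA_of_two_le {n : ℕ} (h : 2 ≤ n) : ¬ pA (Fin n) := by
  intro hp
  have := hp ⟨0, by omega⟩ ⟨1, by omega⟩
  simp [Fin.ext_iff] at this

lemma const_of_adj {n : ℕ} {G : SimpleGraph (Fin n)} (hG : G.Connected) {X : Type*}
    (f : Fin n → X) (h : ∀ v u, G.Adj v u → f u = f v) (v u : Fin n) : f v = f u := by
  obtain ⟨p⟩ := hG v u
  induction p with
  | nil => rfl
  | cons h' q ih => exact (h _ _ h').symm.trans ih

lemma exists_adj_dist_lt {n : ℕ} {G : SimpleGraph (Fin n)} (hG : G.Connected) {v a : Fin n}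
    (h : v ≠ a) : ∃ u, G.Adj v u ∧ G.dist u a < G.dist v a := by
  obtain ⟨p, hp⟩ := hG.exists_walk_length_eq_dist v a
  cases p with
  | nil => exact absurd rfl h
  | cons h' q =>
    refine ⟨_, h', ?_⟩
    have h1 := SimpleGraph.dist_le q
    rw [SimpleGraph.Walk.length_cons] at hp
    omega

lemma dist_lt {n : ℕ} {G : SimpleGraph (Fin n)} (hG : G.Connected) (v a : Fin n) :
    G.dist v a ≤ n := by
  obtain ⟨p⟩ := hG v a
  have h1 := SimpleGraph.dist_le (p.toPath : G.Walk v a)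
  have h2 := p.toPath.2.length_lt
  rw [Fintype.card_fin] at h2
  omega

lemma gadget_aux {n : ℕ} {G : SimpleGraph (Fin n)} {v : Fin n} :
    ∀ (a z0 : Fin n) (p : G.Walk a z0), z0 ≠ v → ¬ G.Adj v z0 → (a = v ∨ G.Adj v a) →
      ∃ y z, G.Adj v y ∧ G.Adj y z ∧ ¬ G.Adj v z ∧ z ≠ v := by
  intro a z0 p
  induction p with
  | nil =>
    rintro h1 h2 (rfl | hadj)
    · exact absurd rfl h1
    · exact absurd hadj h2
  | @cons a b c h' q ih =>
    rintro h1 h2 hcase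
    by_cases hb : b = v ∨ G.Adj v b
    · exact ih h1 h2 hb
    · push_neg at hb
      rcases hcase with rfl | hadj
      · exact absurd h' hb.2
      · exact ⟨a, b, hadj, h', hb.2, hb.1⟩

lemma gadget {n : ℕ} {G : SimpleGraph (Fin n)} (hG : G.Connected) {v : Fin n}
    (h : ¬ isUniv G v) : ∃ y z, G.Adj v y ∧ G.Adj y z ∧ ¬ G.Adj v z ∧ z ≠ v := by
  unfold isUniv at h
  push_neg at h
  obtain ⟨z0, hz0ne, hz0na⟩ := h
  exact gadget_aux v z0 (hG v z0).some hz0ne hz0na (Or.inl rfl)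

end Cert

section Sound

theorem soundness {n : ℕ} (φ : GraphFormula 0) (G : SimpleGraph (Fin n)) (hG : G.Connected)
    (ids : Fin n → ℕ) (hids : Function.Injective ids) (cert : Fin n → List Bool)
    (hacc : ∀ v, AccProp φ (ids v) (cert v) (neighborsView G ids cert v)) :
    SatSentence G φ := by
  haveI : Nonempty (Fin n) := hG.nonempty
  haveI : Nonempty (Fin n) := hG.nonempty
  set fL : Fin n → ℕ := fun v => fieldOf 0 (cert v) with hfL
  -- agreement & constancy of shared fields
  have hagree : ∀ v u, G.Adj v u →
      (fun v => (fieldOf 0 (cert v), fieldOf 1 (cert v), fieldOf 2 (cert v))) u =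
      (fun v => (fieldOf 0 (cert v), fieldOf 1 (cert v), fieldOf 2 (cert v))) v := by
    intro v u hadj
    obtain ⟨h1, h2, h3⟩ := (hacc v).2.1 _ (mem_view hadj)
    simp only [Prod.mk.injEq]
    exact ⟨h1, h2, h3⟩
  have hconst := const_of_adj hG _ hagree
  obtain ⟨v0⟩ := ‹Nonempty (Fin n)›
  obtain ⟨L, hL⟩ : ∃ L, fieldOf 0 (cert v0) = L := ⟨_, rfl⟩
  obtain ⟨U, hU⟩ : ∃ U, fieldOf 1 (cert v0) = U := ⟨_, rfl⟩
  obtain ⟨D, hD⟩ : ∃ D, fieldOf 2 (cert v0) = D := ⟨_, rfl⟩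
  have hcL : ∀ v, fieldOf 0 (cert v) = L :=
    fun v => (congrArg (fun p => p.1) (hconst v v0)).trans hL
  have hc1 : ∀ v, fieldOf 1 (cert v) = U :=
    fun v => (congrArg (fun p => p.2.1) (hconst v v0)).trans hU
  have hc2 : ∀ v, fieldOf 2 (cert v) = D :=
    fun v => (congrArg (fun p => p.2.2) (hconst v v0)).trans hD
  obtain ⟨g0, g1, g2, g3⟩ := glabel_spec G
  have hT : TrueOn φ L := by
    have := (hacc v0).2.2.2.1
    rwa [hcL v0] at this
  have hval : L = 0 ∨ L = 1 ∨ L = 2 ∨ L = 3 := by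
    have := (hacc v0).2.2.1
    rw [hcL v0] at this
    omega
  -- helper: in cases 1 and 2 there is a universal vertex with id U
  have huniv : L = 1 ∨ L = 2 → ∃ w, ids w = U ∧ isUniv G w := by
    intro hcase
    have hloc : ∀ v, ids v = U ∨ ∃ p ∈ neighborsView G ids cert v, p.1 = U := by
      intro v
      rcases hcase with h | h
      · have := ((hacc v).2.2.2.2.2.1 (by rw [hcL v, h])).1
        rwa [hc1 v] at this
      · have := ((hacc v).2.2.2.2.2.2.1 (by rw [hcL v, h])).1
        rwa [hc1 v] at this
    have hex : ∃ w, ids w = U := by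
      rcases hloc v0 with h | ⟨p, ⟨u, _, rfl⟩, h⟩
      · exact ⟨v0, h⟩
      · exact ⟨u, h⟩
    obtain ⟨w, hw⟩ := hex
    refine ⟨w, hw, ?_⟩
    intro u hu
    rcases hloc u with h | ⟨p, ⟨x, hx, rfl⟩, h⟩
    · exact absurd (hids (h.trans hw.symm)) hu
    · have : x = w := hids (h.trans hw.symm)
      subst this
      exact hx.symm
  rcases hval with h | h | h | h
  · -- single vertex
    have hempty : ∀ v, neighborsView G ids cert v = ∅ := by
      intro v
      exact (hacc v).2.2.2.2.1 (by rw [hcL v, h])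
    have hpA : pA (Fin n) := by
      intro u v
      by_contra huv
      obtain ⟨z, hz⟩ := exists_adj_of_ne hG huv
      have := mem_view (ids := ids) (cert := cert) hz
      rw [hempty u] at this
      exact this
    rw [h] at hT
    exact hT n G hG (g0.mpr hpA)
  · -- complete
    obtain ⟨w, hwid, hwu⟩ := huniv (Or.inl h)
    have hcl : ∀ v, (neighborsView G ids cert v).ncard = D ∧ 1 ≤ D := by
      intro v
      have := (hacc v).2.2.2.2.2.1 (by rw [hcL v, h])
      rw [hc2 v] at this
      exact ⟨this.2.1, this.2.2⟩
    have hDn : D = n - 1 := by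
      have := (hcl w).1
      rw [view_ncard G hids, ncard_nbr_of_isUniv hwu] at this
      omega
    have hn2 : 2 ≤ n := by
      have h1 := (hcl w).2
      have h2 := ncard_nbr_of_isUniv hwu
      by_contra hn
      push_neg at hn
      omega
    have hpK : pK G := by
      apply pK_of_ncards ?_ hn2
      intro v
      have := (hcl v).1
      rw [view_ncard G hids] at this
      omega
    rw [h] at hT
    exact hT n G hG (g1.mpr ⟨not_pA_of_two_le hn2, hpK⟩)
  · -- universal but not complete
    obtain ⟨w, hwid, hwu⟩ := huniv (Or.inr h)
    have hcl : ∀ v, AccProp φ (ids v) (cert v) (neighborsView G ids cert v) := hacc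
    have hclause : ∀ v, (ids v = U → (neighborsView G ids cert v).ncard = D) ∧
        (0 < fieldOf 3 (cert v) → ∃ p ∈ neighborsView G ids cert v,
          fieldOf 3 p.2 < fieldOf 3 (cert v)) ∧
        (fieldOf 3 (cert v) = 0 → (neighborsView G ids cert v).ncard ≠ D) := by
      intro v
      have := (hacc v).2.2.2.2.2.2.1 (by rw [hcL v, h])
      rw [hc1 v, hc2 v] at this
      exact ⟨this.2.1, this.2.2.1, this.2.2.2⟩
    have hDn : D = n - 1 := by
      have := (hclause w).1 hwid
      rw [view_ncard G hids, ncard_nbr_of_isUniv hwu] at this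
      omega
    -- minimal field-3 vertex
    obtain ⟨z, -, hzmin⟩ := Finset.exists_min_image Finset.univ
      (fun v => fieldOf 3 (cert v)) ⟨v0, Finset.mem_univ v0⟩
    have hz0 : fieldOf 3 (cert z) = 0 := by
      by_contra hz
      obtain ⟨p, ⟨x, hx, rfl⟩, hplt⟩ := (hclause z).2.1 (by omega)
      have hplt' : fieldOf 3 (cert x) < fieldOf 3 (cert z) := hplt
      exact absurd (hzmin x (Finset.mem_univ x)) (by omega)
    have hzne : (G.neighborSet z).ncard ≠ n - 1 := by
      have := (hclause z).2.2 hz0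
      rw [view_ncard G hids] at this
      omega
    have hnpK : ¬ pK G := by
      intro hpK
      apply hzne
      have : G.neighborSet z = Set.univ \ {z} := by
        apply Set.eq_of_subset_of_ncard_le (nbrSet_subset G z) ?_ (Set.toFinite _)
        apply Set.ncard_le_ncard ?_ (Set.toFinite _)
        rintro u ⟨-, hu⟩
        exact (hpK z u (Ne.symm hu))
      rw [this, ncard_univ_diff]
    rw [h] at hT
    exact hT n G hG (g2.mpr ⟨hnpK, ⟨w, hwu⟩⟩)
  · -- no universal vertex
    have hnU : ¬ pU G := by
      rintro ⟨w, hw⟩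
      -- derive that w has a non-neighbor, contradiction
      have hclw := (hacc w).2.2.2.2.2.2.2 (by rw [hcL w, h])
      obtain ⟨p, ⟨y, hy, rfl⟩, hyid⟩ := hclw.2.2.1
      have hcly := (hacc y).2.2.2.2.2.2.2 (by rw [hcL y, h])
      obtain ⟨q, ⟨z, hz, rfl⟩, hzid⟩ := hcly.2.2.2 (ids w, cert w) (mem_view hy.symm) hyid.symm
      -- z is not adjacent to w and z ≠ w
      have hzw : z ≠ w := fun hzw => hclw.2.1 (hzid.symm.trans (congrArg ids hzw))
      have : ¬ G.Adj w z := by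
        intro hadj
        exact hclw.1 _ (mem_view hadj) hzid
      exact this (hw z hzw)
    rw [h] at hT
    exact hT n G hG (g3.mpr hnU)

end Sound

section Complete

theorem completeness {n : ℕ} (c : ℕ) (hc : 1 ≤ c) (φ : GraphFormula 0) (hφ : φ.qdepth ≤ 2)
    (G : SimpleGraph (Fin n)) (hG : G.Connected) (ids : Fin n → ℕ) (hids : ValidIds c ids)
    (hSat : SatSentence G φ) :
    ∃ cert : Fin n → List Bool,
      (∀ v, (cert v).length ≤ 12 * (c + 3) * (Nat.log 2 n + 1)) ∧
      ∀ v, AccProp φ (ids v) (cert v) (neighborsView G ids cert v) := by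
  haveI : Nonempty (Fin n) := hG.nonempty
  obtain ⟨v0⟩ := ‹Nonempty (Fin n)›
  have hn1 : 0 < n := v0.pos
  set W := (c + 3) * (Nat.log 2 n + 2) with hW
  -- all relevant values fit in W bits
  have hkey : ∀ m : ℕ, m ≤ 5 * n ^ c → m < 2 ^ W := by
    intro m hm
    have h1 : n < 2 ^ (Nat.log 2 n + 1) := Nat.lt_pow_succ_log_self (by norm_num) n
    have h2 : n ^ c ≤ 2 ^ (c * (Nat.log 2 n + 1)) := by
      calc n ^ c ≤ (2 ^ (Nat.log 2 n + 1)) ^ c := Nat.pow_le_pow_left h1.le c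
        _ = 2 ^ (c * (Nat.log 2 n + 1)) := by rw [← pow_mul, Nat.mul_comm]
    have h3 : 5 * n ^ c < 2 ^ (c * (Nat.log 2 n + 1) + 3) := by
      have : (2:ℕ) ^ (c * (Nat.log 2 n + 1) + 3) = 8 * 2 ^ (c * (Nat.log 2 n + 1)) := by ring
      rw [this]
      have hp : 0 < (2:ℕ) ^ (c * (Nat.log 2 n + 1)) := Nat.pow_pos (by norm_num)
      omega
    have h4 : c * (Nat.log 2 n + 1) + 3 ≤ W := by
      have e1 : c * (Nat.log 2 n + 1) + 3 = c * Nat.log 2 n + c + 3 := by ring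
      have e2 : W = c * Nat.log 2 n + 2 * c + 3 * Nat.log 2 n + 6 := by rw [hW]; ring
      omega
    calc m ≤ 5 * n ^ c := hm
      _ < 2 ^ (c * (Nat.log 2 n + 1) + 3) := h3
      _ ≤ 2 ^ W := Nat.pow_le_pow_right (by norm_num) h4
  have hpow : 1 ≤ n ^ c := Nat.one_le_pow _ _ hn1
  have hnc : n ≤ n ^ c := Nat.le_self_pow (by omega) n
  have hid_lt : ∀ v, ids v < 2 ^ W := fun v => hkey _ (by have := (hids.2 v).2; omega)
  have hsmall : ∀ m : ℕ, m ≤ 3 → m < 2 ^ W := fun m hm => hkey m (by omega)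
  have hnm : n - 1 < 2 ^ W := hkey _ (by omega)
  have hlen6 : 6 * W ≤ 12 * (c + 3) * (Nat.log 2 n + 1) := by
    calc 6 * ((c + 3) * (Nat.log 2 n + 2)) ≤ 6 * ((c + 3) * (2 * (Nat.log 2 n + 1))) :=
      Nat.mul_le_mul_left _ (Nat.mul_le_mul_left _ (by omega))
    _ = 12 * (c + 3) * (Nat.log 2 n + 1) := by ring
  obtain ⟨g0, g1, g2, g3⟩ := glabel_spec G
  have hTrue := trueOn_glabel G hG φ hφ hSat
  by_cases hA : pA (Fin n)
  · -- class 0 : single vertex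
    have hlab : glabel G = 0 := g0.mpr hA
    rw [hlab] at hTrue
    refine ⟨fun _ => mkC W 0 0 0 0 0 0, ?_, ?_⟩
    · intro v; rw [length_mkC]; omega
    · intro v
      have hf := fieldOf_mkC W 0 0 0 0 0 0 ⟨hsmall 0 (by omega), hsmall 0 (by omega),
        hsmall 0 (by omega), hsmall 0 (by omega), hsmall 0 (by omega), hsmall 0 (by omega)⟩
      have hview : neighborsView G ids (fun _ => mkC W 0 0 0 0 0 0) v = ∅ := by
        rw [Set.eq_empty_iff_forall_notMem]
        rintro p ⟨u, hadj, -⟩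
        cases hA u v
        exact G.irrefl hadj
      rw [hview]
      exact ⟨Set.finite_empty, by simp, hf.1.le.trans (by omega), by rw [hf.1]; exact hTrue,
        fun _ => rfl, fun h => absurd (hf.1.symm.trans h) (by omega),
        fun h => absurd (hf.1.symm.trans h) (by omega),
        fun h => absurd (hf.1.symm.trans h) (by omega)⟩
  by_cases hK : pK G
  · -- class 1 : complete
    have hn2 : 2 ≤ n := two_le_of_not_pA hA
    have hlab : glabel G = 1 := g1.mpr ⟨hA, hK⟩
    rw [hlab] at hTrue
    have hnbr : ∀ v : Fin n, G.neighborSet v = Set.univ \ {v} := by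
      intro v
      ext u
      constructor
      · intro hu; exact ⟨Set.mem_univ u, (G.ne_of_adj hu).symm⟩
      · rintro ⟨-, hu⟩
        exact hK v u fun h => hu (Set.mem_singleton_iff.mpr h.symm)
    set ct : Fin n → List Bool := fun _ => mkC W 1 (ids v0) (n - 1) 0 0 0 with hct
    have hf : ∀ v, fieldOf 0 (ct v) = 1 ∧ fieldOf 1 (ct v) = ids v0 ∧
        fieldOf 2 (ct v) = n - 1 := by
      intro v
      have := fieldOf_mkC W 1 (ids v0) (n - 1) 0 0 0 ⟨hsmall 1 (by omega), hid_lt v0, hnm,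
        hsmall 0 (by omega), hsmall 0 (by omega), hsmall 0 (by omega)⟩
      exact ⟨this.1, this.2.1, this.2.2.1⟩
    refine ⟨ct, ?_, ?_⟩
    · intro v; rw [hct]; rw [length_mkC]; omega
    · intro v
      have hcard : (neighborsView G ids ct v).ncard = n - 1 := by
        rw [view_ncard G hids.1, hnbr, ncard_univ_diff]
      refine ⟨view_finite G _ _ v, ?_, (hf v).1.le.trans (by omega),
        by rw [(hf v).1]; exact hTrue,
        fun h => absurd ((hf v).1.symm.trans h) (by omega), ?_,
        fun h => absurd ((hf v).1.symm.trans h) (by omega),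
        fun h => absurd ((hf v).1.symm.trans h) (by omega)⟩
      · rintro p ⟨u, -, rfl⟩
        exact ⟨(hf u).1.trans (hf v).1.symm, (hf u).2.1.trans (hf v).2.1.symm,
          (hf u).2.2.trans (hf v).2.2.symm⟩
      · rintro -
        rw [(hf v).2.1, (hf v).2.2]
        refine ⟨?_, hcard, by omega⟩
        by_cases hvw : v = v0
        · exact Or.inl (by rw [hvw])
        · exact Or.inr ⟨(ids v0, ct v0), mem_view (hK v v0 hvw), rfl⟩
  by_cases hUu : pU G
  · -- class 2 : universal vertex but not complete
    obtain ⟨w, hw⟩ := hUu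
    have hlab : glabel G = 2 := g2.mpr ⟨hK, ⟨w, hw⟩⟩
    rw [hlab] at hTrue
    have hnK := hK
    unfold pK at hnK
    push_neg at hnK
    obtain ⟨a, b, hab, hnadj⟩ := hnK
    have hn2 : 2 ≤ n := two_le_of_not_pA hA
    set ct : Fin n → List Bool := fun v => mkC W 2 (ids w) (n - 1) (G.dist v a) 0 0 with hct
    have hf : ∀ v, fieldOf 0 (ct v) = 2 ∧ fieldOf 1 (ct v) = ids w ∧
        fieldOf 2 (ct v) = n - 1 ∧ fieldOf 3 (ct v) = G.dist v a ∧
        fieldOf 4 (ct v) = 0 ∧ fieldOf 5 (ct v) = 0 := by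
      intro v
      exact fieldOf_mkC W 2 (ids w) (n - 1) (G.dist v a) 0 0 ⟨hsmall 2 (by omega), hid_lt w, hnm,
        hkey _ (by have := dist_lt hG v a; omega), hsmall 0 (by omega), hsmall 0 (by omega)⟩
    refine ⟨ct, ?_, ?_⟩
    · intro v; rw [hct]; rw [length_mkC]; omega
    · intro v
      refine ⟨view_finite G _ _ v, ?_, (hf v).1.le.trans (by omega),
        by rw [(hf v).1]; exact hTrue,
        fun h => absurd ((hf v).1.symm.trans h) (by omega),
        fun h => absurd ((hf v).1.symm.trans h) (by omega), ?_,
        fun h => absurd ((hf v).1.symm.trans h) (by omega)⟩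
      · rintro p ⟨u, -, rfl⟩
        exact ⟨(hf u).1.trans (hf v).1.symm, (hf u).2.1.trans (hf v).2.1.symm,
          (hf u).2.2.1.trans (hf v).2.2.1.symm⟩
      · rintro -
        rw [(hf v).2.1, (hf v).2.2.1, (hf v).2.2.2.1]
        refine ⟨?_, ?_, ?_, ?_⟩
        · by_cases hvw : v = w
          · exact Or.inl (by rw [hvw])
          · exact Or.inr ⟨(ids w, ct w), mem_view (hw v hvw).symm, rfl⟩
        · intro hvw
          have : v = w := hids.1 hvw
          subst this
          rw [view_ncard G hids.1, ncard_nbr_of_isUniv hw]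
        · intro hd
          have hva : v ≠ a := by
            intro h
            rw [h, SimpleGraph.dist_self] at hd
            omega
          obtain ⟨u, hadj, hlt⟩ := exists_adj_dist_lt hG hva
          exact ⟨(ids u, ct u), mem_view hadj, by rw [(hf u).2.2.2.1]; exact hlt⟩
        · intro hd
          have hva : v = a := (hG.dist_eq_zero_iff).mp hd
          subst hva
          rw [view_ncard G hids.1]
          have hsub : G.neighborSet v ⊆ Set.univ \ {v, b} := by
            intro u hu
            refine ⟨Set.mem_univ u, ?_⟩
            rintro (rfl | rfl)
            · exact G.irrefl hu
            · exact hnadj hu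
          have hcard2 : (Set.univ \ {v, b} : Set (Fin n)).ncard = n - 2 := by
            rw [show (Set.univ \ {v, b} : Set (Fin n)) = (Set.univ \ {v}) \ {b} by
              rw [Set.diff_diff, Set.singleton_union]]
            have hb : b ∈ (Set.univ \ {v} : Set (Fin n)) := ⟨Set.mem_univ b, by simp [Ne.symm hab]⟩
            rw [Set.ncard_diff_singleton_of_mem hb, ncard_univ_diff]
            omega
          have hle := Set.ncard_le_ncard hsub (Set.toFinite _)
          rw [hcard2] at hle
          omega
  · -- class 3 : no universal vertex
    have hlab : glabel G = 3 := g3.mpr hUu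
    rw [hlab] at hTrue
    have hch : ∀ v : Fin n, ∃ yz : Fin n × Fin n, G.Adj v yz.1 ∧ G.Adj yz.1 yz.2 ∧
        ¬ G.Adj v yz.2 ∧ yz.2 ≠ v := by
      intro v
      obtain ⟨y, z, h1, h2, h3, h4⟩ := gadget hG (fun h => hUu ⟨v, h⟩)
      exact ⟨(y, z), h1, h2, h3, h4⟩
    choose F hF1 hF2 hF3 hF4 using hch
    set ct : Fin n → List Bool := fun v => mkC W 3 0 0 0 (ids (F v).2) (ids (F v).1) with hct
    have hf : ∀ v, fieldOf 0 (ct v) = 3 ∧ fieldOf 1 (ct v) = 0 ∧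
        fieldOf 2 (ct v) = 0 ∧ fieldOf 3 (ct v) = 0 ∧
        fieldOf 4 (ct v) = ids (F v).2 ∧ fieldOf 5 (ct v) = ids (F v).1 := by
      intro v
      exact fieldOf_mkC W 3 0 0 0 (ids (F v).2) (ids (F v).1) ⟨hsmall 3 (by omega),
        hsmall 0 (by omega), hsmall 0 (by omega), hsmall 0 (by omega), hid_lt _, hid_lt _⟩
    refine ⟨ct, ?_, ?_⟩
    · intro v; rw [hct]; rw [length_mkC]; omega
    · intro v
      refine ⟨view_finite G _ _ v, ?_, (hf v).1.le.trans (by omega),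
        by rw [(hf v).1]; exact hTrue,
        fun h => absurd ((hf v).1.symm.trans h) (by omega),
        fun h => absurd ((hf v).1.symm.trans h) (by omega),
        fun h => absurd ((hf v).1.symm.trans h) (by omega), ?_⟩
      · rintro p ⟨u, -, rfl⟩
        exact ⟨(hf u).1.trans (hf v).1.symm, (hf u).2.1.trans (hf v).2.1.symm,
          (hf u).2.2.1.trans (hf v).2.2.1.symm⟩
      · rintro -
        rw [(hf v).2.2.2.2.1, (hf v).2.2.2.2.2]
        refine ⟨?_, ?_, ?_, ?_⟩
        · rintro p ⟨u, hadj, rfl⟩ hpid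
          have : u = (F v).2 := hids.1 hpid
          subst this
          exact hF3 v hadj
        · exact fun h => hF4 v (hids.1 h)
        · exact ⟨(ids (F v).1, ct (F v).1), mem_view (hF1 v), rfl⟩
        · rintro p ⟨u, hadj, rfl⟩ hpid
          have h5 : fieldOf 5 (ct u) = ids (F u).1 := (hf u).2.2.2.2.2
          have : (F u).1 = v := hids.1 (by rw [← h5]; exact hpid)
          refine ⟨(ids (F u).2, ct (F u).2), mem_view (by rw [← this]; exact hF2 u), ?_⟩
          rw [(hf u).2.2.2.2.1]

end Complete

/-- Every FO sentence `φ` of quantifier depth at most `2` admits a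
local certification scheme with certificates of size `O(log n)` bits on connected
graphs. -/
theorem qdepth2_local_certification (c : ℕ) (hc : 1 ≤ c)
    (φ : GraphFormula 0) (hφ : GraphFormula.qdepth φ ≤ 2) :
    ∃ (C : ℕ) (verify : ℕ → List Bool → Set (ℕ × List Bool) → Bool),
      ∀ (n : ℕ) (G : SimpleGraph (Fin n)), G.Connected →
        ∀ ids : Fin n → ℕ, ValidIds c ids →
          ((SatSentence G φ →
              ∃ cert : Fin n → List Bool,
                (∀ v, (cert v).length ≤ C * (Nat.log 2 n + 1)) ∧
                ∀ v, verify (ids v) (cert v) (neighborsView G ids cert v) = true) ∧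
            (¬ SatSentence G φ →
              ∀ cert : Fin n → List Bool,
                ∃ v, verify (ids v) (cert v) (neighborsView G ids cert v) = false)) := by
  refine ⟨12 * (c + 3), verifyF φ, ?_⟩
  intro n G hG ids hids
  constructor
  · intro hSat
    obtain ⟨cert, hlen, hAcc⟩ := completeness c hc φ hφ G hG ids hids hSat
    exact ⟨cert, hlen, fun v => verifyF_eq_true.mpr (hAcc v)⟩
  · intro hNot cert
    by_contra hcon
    push_neg at hcon
    apply hNot
    apply soundness φ G hG ids hids.1 cert
    intro v
    have := hcon v
    rw [← verifyF_eq_true]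
    cases hb : verifyF φ (ids v) (cert v) (neighborsView G ids cert v)
    · exact absurd hb (hcon v)
    · rfl
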